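/- The eight polynomials K_{4,0} = 12x³+50x²+32x+2, K_{4,1} = 18x³+52x²+26x, K_{4,2} = 26x³+52x²+18x, K_{4,3} = K_{4,4} = 2x⁴+32x³+50x²+12x, K_{4,5} = 4x⁴+38x³+48x²+6x, K_{4,6} = 6x⁴+48x³+38x²+4x, K_{4,7} = 12x⁴+50x³+32x²+2x form a mutually interlacing sequence of real-rooted polynomials. -/

import Mathlib

open Polynomial

/-- `f` has only real zeros (every complex zero is real). -/
def RealRooted (f : Polynomial ℝ) : Prop :=
  ∀ z : ℂ, z ∈ (f.map (algebraMap ℝ ℂ)).roots → z.im = 0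

/-- all zeros of `f` are real (counted with multiplicity). -/
def AllRealRoots (f : Polynomial ℝ) : Prop :=
  f.roots.card = f.natDegree

/-- two polynomials are compatible if every nonnegative linear combination
has only real zeros. -/
def Compatible (f g : Polynomial ℝ) : Prop :=
  ∀ c d : ℝ, 0 ≤ c → 0 ≤ d → RealRooted (C c * f + C d * g)

/-- `Interlaces g f` means `g ⪯ f`: both are real-rooted with positive leading
coefficients, and listing the zeros in decreasing order `u` (of `f`) and `v`
(of `g`), either `deg f = deg g` and `vₙ ≤ uₙ ≤ ⋯ ≤ v₁ ≤ u₁`, or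
`deg f = deg g + 1` and `uₙ ≤ vₙ₋₁ ≤ ⋯ ≤ v₁ ≤ u₁`. -/
def Interlaces (g f : Polynomial ℝ) : Prop :=
  0 < f.leadingCoeff ∧ 0 < g.leadingCoeff ∧
  ∃ u v : List ℝ,
    u.Pairwise (· ≥ ·) ∧ v.Pairwise (· ≥ ·) ∧
    f.roots = (u : Multiset ℝ) ∧ g.roots = (v : Multiset ℝ) ∧
    u.length = f.natDegree ∧ v.length = g.natDegree ∧
    (u.length = v.length ∨ u.length = v.length + 1) ∧
    (∀ (i : ℕ) (hv : i < v.length) (hu : i < u.length),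
      v.get ⟨i, hv⟩ ≤ u.get ⟨i, hu⟩) ∧
    (∀ (i : ℕ) (hu : i + 1 < u.length) (hv : i < v.length),
      u.get ⟨i + 1, hu⟩ ≤ v.get ⟨i, hv⟩)


section Aux

noncomputable def pp0 : Polynomial ℝ := C 12 * X ^ 3 + C 50 * X ^ 2 + C 32 * X + C 2

noncomputable def pp1 : Polynomial ℝ := C 18 * X ^ 3 + C 52 * X ^ 2 + C 26 * X

noncomputable def pp2 : Polynomial ℝ := C 26 * X ^ 3 + C 52 * X ^ 2 + C 18 * X

noncomputable def pp3 : Polynomial ℝ := C 2 * X ^ 4 + C 32 * X ^ 3 + C 50 * X ^ 2 + C 12 * X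

noncomputable def pp5 : Polynomial ℝ := C 4 * X ^ 4 + C 38 * X ^ 3 + C 48 * X ^ 2 + C 6 * X

noncomputable def pp6 : Polynomial ℝ := C 6 * X ^ 4 + C 48 * X ^ 3 + C 38 * X ^ 2 + C 4 * X

noncomputable def pp7 : Polynomial ℝ := C 12 * X ^ 4 + C 50 * X ^ 3 + C 32 * X ^ 2 + C 2 * X

lemma hdeg0 : pp0.natDegree = 3 := by unfold pp0; compute_degree!

lemma hdeg1 : pp1.natDegree = 3 := by unfold pp1; compute_degree!

lemma hdeg2 : pp2.natDegree = 3 := by unfold pp2; compute_degree!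

lemma hdeg3 : pp3.natDegree = 4 := by unfold pp3; compute_degree!

lemma hdeg5 : pp5.natDegree = 4 := by unfold pp5; compute_degree!

lemma hdeg6 : pp6.natDegree = 4 := by unfold pp6; compute_degree!

lemma hdeg7 : pp7.natDegree = 4 := by unfold pp7; compute_degree!

lemma hlead0 : 0 < pp0.leadingCoeff := by
  have h : pp0.leadingCoeff = pp0.coeff 3 := by rw [← hdeg0]; rfl
  rw [h]
  norm_num [pp0, coeff_add, coeff_C_mul, coeff_X_pow, coeff_C, coeff_X]

lemma hlead1 : 0 < pp1.leadingCoeff := by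
  have h : pp1.leadingCoeff = pp1.coeff 3 := by rw [← hdeg1]; rfl
  rw [h]
  norm_num [pp1, coeff_add, coeff_C_mul, coeff_X_pow, coeff_C, coeff_X]

lemma hlead2 : 0 < pp2.leadingCoeff := by
  have h : pp2.leadingCoeff = pp2.coeff 3 := by rw [← hdeg2]; rfl
  rw [h]
  norm_num [pp2, coeff_add, coeff_C_mul, coeff_X_pow, coeff_C, coeff_X]

lemma hlead3 : 0 < pp3.leadingCoeff := by
  have h : pp3.leadingCoeff = pp3.coeff 4 := by rw [← hdeg3]; rfl
  rw [h]
  norm_num [pp3, coeff_add, coeff_C_mul, coeff_X_pow, coeff_C, coeff_X]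

lemma hlead5 : 0 < pp5.leadingCoeff := by
  have h : pp5.leadingCoeff = pp5.coeff 4 := by rw [← hdeg5]; rfl
  rw [h]
  norm_num [pp5, coeff_add, coeff_C_mul, coeff_X_pow, coeff_C, coeff_X]

lemma hlead6 : 0 < pp6.leadingCoeff := by
  have h : pp6.leadingCoeff = pp6.coeff 4 := by rw [← hdeg6]; rfl
  rw [h]
  norm_num [pp6, coeff_add, coeff_C_mul, coeff_X_pow, coeff_C, coeff_X]

lemma hlead7 : 0 < pp7.leadingCoeff := by
  have h : pp7.leadingCoeff = pp7.coeff 4 := by rw [← hdeg7]; rfl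
  rw [h]
  norm_num [pp7, coeff_add, coeff_C_mul, coeff_X_pow, coeff_C, coeff_X]

lemma exists_root_between (f : Polynomial ℝ) {a b : ℝ} (hab : a < b)
    (h : f.eval a * f.eval b < 0) : ∃ r, a < r ∧ r < b ∧ f.eval r = 0 := by
  rcases mul_neg_iff.mp h with ⟨ha, hb⟩ | ⟨ha, hb⟩
  · obtain ⟨r, hr, hr0⟩ := intermediate_value_Ioo' hab.le f.continuous.continuousOn ⟨hb, ha⟩
    exact ⟨r, hr.1, hr.2, hr0⟩
  · obtain ⟨r, hr, hr0⟩ := intermediate_value_Ioo hab.le f.continuous.continuousOn ⟨ha, hb⟩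
    exact ⟨r, hr.1, hr.2, hr0⟩

lemma sorted3 {x y z : ℝ} (h1 : y ≤ x) (h2 : z ≤ y) : List.Pairwise (· ≥ ·) [x, y, z] := by
  refine List.Pairwise.cons ?_ (List.Pairwise.cons ?_ (List.pairwise_singleton _ _))
  · intro b hb; simp at hb; rcases hb with rfl | rfl <;> linarith
  · intro b hb; simp at hb; subst hb; linarith

lemma sorted4 {w x y z : ℝ} (h0 : x ≤ w) (h1 : y ≤ x) (h2 : z ≤ y) :
    List.Pairwise (· ≥ ·) [w, x, y, z] := by
  refine List.Pairwise.cons ?_ (sorted3 h1 h2)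
  intro b hb; simp at hb; rcases hb with rfl | rfl | rfl <;> linarith

lemma roots_eq3 {f : Polynomial ℝ} (hd : f.natDegree = 3)
    {r1 r2 r3 : ℝ} (h12 : r2 < r1) (h23 : r3 < r2)
    (e1 : f.eval r1 = 0) (e2 : f.eval r2 = 0) (e3 : f.eval r3 = 0) :
    f.roots = ↑[r1, r2, r3] := by
  have hf : f ≠ 0 := fun h => by simp [h] at hd
  have hnd : ([r1, r2, r3] : List ℝ).Nodup := by
    refine List.Pairwise.cons ?_ (List.Pairwise.cons ?_ (List.pairwise_singleton _ _))
    · intro b hb; simp at hb; rcases hb with rfl | rfl <;> exact fun h => by linarith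
    · intro b hb; simp at hb; subst hb; exact fun h => by linarith
  have hle : (↑[r1, r2, r3] : Multiset ℝ) ≤ f.roots := by
    rw [Multiset.le_iff_subset (Multiset.coe_nodup.mpr hnd)]
    intro x hx
    simp only [Multiset.mem_coe, List.mem_cons, List.not_mem_nil, or_false] at hx
    rcases hx with rfl | rfl | rfl
    · exact (mem_roots hf).mpr e1
    · exact (mem_roots hf).mpr e2
    · exact (mem_roots hf).mpr e3
  have h3 : Multiset.card f.roots ≤ 3 := by rw [← hd]; exact f.card_roots'
  exact (Multiset.eq_of_le_of_card_le hle (by simpa using h3)).symm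

lemma roots_eq4 {f : Polynomial ℝ} (hd : f.natDegree = 4)
    {r1 r2 r3 r4 : ℝ} (h12 : r2 < r1) (h23 : r3 < r2) (h34 : r4 < r3)
    (e1 : f.eval r1 = 0) (e2 : f.eval r2 = 0) (e3 : f.eval r3 = 0) (e4 : f.eval r4 = 0) :
    f.roots = ↑[r1, r2, r3, r4] := by
  have hf : f ≠ 0 := fun h => by simp [h] at hd
  have hnd : ([r1, r2, r3, r4] : List ℝ).Nodup := by
    refine List.Pairwise.cons ?_ (List.Pairwise.cons ?_ (List.Pairwise.cons ?_
      (List.pairwise_singleton _ _)))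
    · intro b hb; simp at hb; rcases hb with rfl | rfl | rfl <;> exact fun h => by linarith
    · intro b hb; simp at hb; rcases hb with rfl | rfl <;> exact fun h => by linarith
    · intro b hb; simp at hb; subst hb; exact fun h => by linarith
  have hle : (↑[r1, r2, r3, r4] : Multiset ℝ) ≤ f.roots := by
    rw [Multiset.le_iff_subset (Multiset.coe_nodup.mpr hnd)]
    intro x hx
    simp only [Multiset.mem_coe, List.mem_cons, List.not_mem_nil, or_false] at hx
    rcases hx with rfl | rfl | rfl | rfl
    · exact (mem_roots hf).mpr e1
    · exact (mem_roots hf).mpr e2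
    · exact (mem_roots hf).mpr e3
    · exact (mem_roots hf).mpr e4
  have h4 : Multiset.card f.roots ≤ 4 := by rw [← hd]; exact f.card_roots'
  exact (Multiset.eq_of_le_of_card_le hle (by simpa using h4)).symm

lemma interlaces33 {f g : Polynomial ℝ} {u1 u2 u3 v1 v2 v3 : ℝ}
    (hfl : 0 < f.leadingCoeff) (hgl : 0 < g.leadingCoeff)
    (hfd : f.natDegree = 3) (hgd : g.natDegree = 3)
    (hfr : f.roots = ↑[u1, u2, u3]) (hgr : g.roots = ↑[v1, v2, v3])
    (h1 : v1 ≤ u1) (h2 : u2 ≤ v1) (h3 : v2 ≤ u2) (h4 : u3 ≤ v2) (h5 : v3 ≤ u3) :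
    Interlaces g f := by
  refine ⟨hfl, hgl, [u1, u2, u3], [v1, v2, v3],
    sorted3 (by linarith) (by linarith), sorted3 (by linarith) (by linarith),
    hfr, hgr, by simp [hfd], by simp [hgd], Or.inl rfl, ?_, ?_⟩
  · intro i hv hu
    simp only [List.length_cons, List.length_nil] at hv
    interval_cases i
    · exact h1
    · exact h3
    · exact h5
  · intro i hu hv
    simp only [List.length_cons, List.length_nil] at hu hv
    interval_cases i
    · exact h2
    · exact h4
    · omega

lemma interlaces34 {f g : Polynomial ℝ} {u1 u2 u3 u4 v1 v2 v3 : ℝ}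
    (hfl : 0 < f.leadingCoeff) (hgl : 0 < g.leadingCoeff)
    (hfd : f.natDegree = 4) (hgd : g.natDegree = 3)
    (hfr : f.roots = ↑[u1, u2, u3, u4]) (hgr : g.roots = ↑[v1, v2, v3])
    (h1 : v1 ≤ u1) (h2 : u2 ≤ v1) (h3 : v2 ≤ u2) (h4 : u3 ≤ v2) (h5 : v3 ≤ u3)
    (h6 : u4 ≤ v3) :
    Interlaces g f := by
  refine ⟨hfl, hgl, [u1, u2, u3, u4], [v1, v2, v3],
    sorted4 (by linarith) (by linarith) (by linarith),
    sorted3 (by linarith) (by linarith),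
    hfr, hgr, by simp [hfd], by simp [hgd], Or.inr rfl, ?_, ?_⟩
  · intro i hv hu
    simp only [List.length_cons, List.length_nil] at hv
    interval_cases i
    · exact h1
    · exact h3
    · exact h5
  · intro i hu hv
    simp only [List.length_cons, List.length_nil] at hu hv
    interval_cases i
    · exact h2
    · exact h4
    · exact h6

lemma interlaces44 {f g : Polynomial ℝ} {u1 u2 u3 u4 v1 v2 v3 v4 : ℝ}
    (hfl : 0 < f.leadingCoeff) (hgl : 0 < g.leadingCoeff)
    (hfd : f.natDegree = 4) (hgd : g.natDegree = 4)
    (hfr : f.roots = ↑[u1, u2, u3, u4]) (hgr : g.roots = ↑[v1, v2, v3, v4])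
    (h1 : v1 ≤ u1) (h2 : u2 ≤ v1) (h3 : v2 ≤ u2) (h4 : u3 ≤ v2) (h5 : v3 ≤ u3)
    (h6 : u4 ≤ v3) (h7 : v4 ≤ u4) :
    Interlaces g f := by
  refine ⟨hfl, hgl, [u1, u2, u3, u4], [v1, v2, v3, v4],
    sorted4 (by linarith) (by linarith) (by linarith),
    sorted4 (by linarith) (by linarith) (by linarith),
    hfr, hgr, by simp [hfd], by simp [hgd], Or.inl rfl, ?_, ?_⟩
  · intro i hv hu
    simp only [List.length_cons, List.length_nil] at hv
    interval_cases i
    · exact h1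
    · exact h3
    · exact h5
    · exact h7
  · intro i hu hv
    simp only [List.length_cons, List.length_nil] at hu hv
    interval_cases i
    · exact h2
    · exact h4
    · exact h6
    · omega

lemma p07_data : ∃ a b c : ℝ,
    (-351/5000 < a ∧ a < -699/10000) ∧ (-7009/10000 < b ∧ b < -3503/5000) ∧
    (-849/250 < c ∧ c < -33957/10000) ∧
    pp0.roots = ↑[a, b, c] ∧ pp7.roots = ↑[(0:ℝ), a, b, c] := by
  obtain ⟨a, hal, har, ha0⟩ := exists_root_between pp0
    (show (-351/5000:ℝ) < -699/10000 by norm_num)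
    (by norm_num [pp0, eval_add, eval_mul, eval_pow])
  obtain ⟨b, hbl, hbr, hb0⟩ := exists_root_between pp0
    (show (-7009/10000:ℝ) < -3503/5000 by norm_num)
    (by norm_num [pp0, eval_add, eval_mul, eval_pow])
  obtain ⟨c, hcl, hcr, hc0⟩ := exists_root_between pp0
    (show (-849/250:ℝ) < -33957/10000 by norm_num)
    (by norm_num [pp0, eval_add, eval_mul, eval_pow])
  have hmul : pp7 = X * pp0 := by unfold pp7 pp0; ring
  have e7 : ∀ x : ℝ, pp0.eval x = 0 → pp7.eval x = 0 := by
    intro x hx; rw [hmul, eval_mul, hx, mul_zero]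
  refine ⟨a, b, c, ⟨hal, har⟩, ⟨hbl, hbr⟩, ⟨hcl, hcr⟩,
    roots_eq3 hdeg0 (by linarith) (by linarith) ha0 hb0 hc0,
    roots_eq4 hdeg7 (by linarith) (by linarith) (by linarith)
      (by rw [hmul]; simp) (e7 a ha0) (e7 b hb0) (e7 c hc0)⟩

lemma p1_data : ∃ a b : ℝ,
    (-3217/5000 < a ∧ a < -6431/10000) ∧ (-11229/5000 < b ∧ b < -4491/2000) ∧
    pp1.roots = ↑[(0:ℝ), a, b] := by
  obtain ⟨a, hal, har, ha0⟩ := exists_root_between pp1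
    (show (-3217/5000:ℝ) < -6431/10000 by norm_num)
    (by norm_num [pp1, eval_add, eval_mul, eval_pow])
  obtain ⟨b, hbl, hbr, hb0⟩ := exists_root_between pp1
    (show (-11229/5000:ℝ) < -4491/2000 by norm_num)
    (by norm_num [pp1, eval_add, eval_mul, eval_pow])
  refine ⟨a, b, ⟨hal, har⟩, ⟨hbl, hbr⟩,
    roots_eq3 hdeg1 (by linarith) (by linarith) (by norm_num [pp1]) ha0 hb0⟩

lemma p2_data : ∃ a b : ℝ,
    (-2227/5000 < a ∧ a < -1113/2500) ∧ (-3887/2500 < b ∧ b < -7773/5000) ∧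
    pp2.roots = ↑[(0:ℝ), a, b] := by
  obtain ⟨a, hal, har, ha0⟩ := exists_root_between pp2
    (show (-2227/5000:ℝ) < -1113/2500 by norm_num)
    (by norm_num [pp2, eval_add, eval_mul, eval_pow])
  obtain ⟨b, hbl, hbr, hb0⟩ := exists_root_between pp2
    (show (-3887/2500:ℝ) < -7773/5000 by norm_num)
    (by norm_num [pp2, eval_add, eval_mul, eval_pow])
  refine ⟨a, b, ⟨hal, har⟩, ⟨hbl, hbr⟩,
    roots_eq3 hdeg2 (by linarith) (by linarith) (by norm_num [pp2]) ha0 hb0⟩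

lemma p3_data : ∃ a b c : ℝ,
    (-1473/5000 < a ∧ a < -2943/10000) ∧ (-14271/10000 < b ∧ b < -3567/2500) ∧ (-142787/10000 < c ∧ c < -8924/625) ∧
    pp3.roots = ↑[(0:ℝ), a, b, c] := by
  obtain ⟨a, hal, har, ha0⟩ := exists_root_between pp3
    (show (-1473/5000:ℝ) < -2943/10000 by norm_num)
    (by norm_num [pp3, eval_add, eval_mul, eval_pow])
  obtain ⟨b, hbl, hbr, hb0⟩ := exists_root_between pp3
    (show (-14271/10000:ℝ) < -3567/2500 by norm_num)
    (by norm_num [pp3, eval_add, eval_mul, eval_pow])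
  obtain ⟨c, hcl, hcr, hc0⟩ := exists_root_between pp3
    (show (-142787/10000:ℝ) < -8924/625 by norm_num)
    (by norm_num [pp3, eval_add, eval_mul, eval_pow])
  refine ⟨a, b, c, ⟨hal, har⟩, ⟨hbl, hbr⟩, ⟨hcl, hcr⟩,
    roots_eq4 hdeg3 (by linarith) (by linarith) (by linarith) (by norm_num [pp3]) ha0 hb0 hc0⟩

lemma p5_data : ∃ a b c : ℝ,
    (-281/2000 < a ∧ a < -701/5000) ∧ (-832/625 < b ∧ b < -13309/10000) ∧ (-5018/625 < c ∧ c < -16057/2000) ∧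
    pp5.roots = ↑[(0:ℝ), a, b, c] := by
  obtain ⟨a, hal, har, ha0⟩ := exists_root_between pp5
    (show (-281/2000:ℝ) < -701/5000 by norm_num)
    (by norm_num [pp5, eval_add, eval_mul, eval_pow])
  obtain ⟨b, hbl, hbr, hb0⟩ := exists_root_between pp5
    (show (-832/625:ℝ) < -13309/10000 by norm_num)
    (by norm_num [pp5, eval_add, eval_mul, eval_pow])
  obtain ⟨c, hcl, hcr, hc0⟩ := exists_root_between pp5
    (show (-5018/625:ℝ) < -16057/2000 by norm_num)
    (by norm_num [pp5, eval_add, eval_mul, eval_pow])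
  refine ⟨a, b, c, ⟨hal, har⟩, ⟨hbl, hbr⟩, ⟨hcl, hcr⟩,
    roots_eq4 hdeg5 (by linarith) (by linarith) (by linarith) (by norm_num [pp5]) ha0 hb0 hc0⟩

lemma p6_data : ∃ a b c : ℝ,
    (-1247/10000 < a ∧ a < -311/2500) ∧ (-1503/2000 < b ∧ b < -939/1250) ∧ (-71243/10000 < c ∧ c < -1781/250) ∧
    pp6.roots = ↑[(0:ℝ), a, b, c] := by
  obtain ⟨a, hal, har, ha0⟩ := exists_root_between pp6
    (show (-1247/10000:ℝ) < -311/2500 by norm_num)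
    (by norm_num [pp6, eval_add, eval_mul, eval_pow])
  obtain ⟨b, hbl, hbr, hb0⟩ := exists_root_between pp6
    (show (-1503/2000:ℝ) < -939/1250 by norm_num)
    (by norm_num [pp6, eval_add, eval_mul, eval_pow])
  obtain ⟨c, hcl, hcr, hc0⟩ := exists_root_between pp6
    (show (-71243/10000:ℝ) < -1781/250 by norm_num)
    (by norm_num [pp6, eval_add, eval_mul, eval_pow])
  refine ⟨a, b, c, ⟨hal, har⟩, ⟨hbl, hbr⟩, ⟨hcl, hcr⟩,
    roots_eq4 hdeg6 (by linarith) (by linarith) (by linarith) (by norm_num [pp6]) ha0 hb0 hc0⟩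

end Aux

set_option maxHeartbeats 4000000 in
/-- The eight polynomials `K_{4,i}(x)` form a mutually interlacing sequence of
real-rooted polynomials. -/
theorem K4_mutually_interlacing (K : Fin 8 → Polynomial ℝ)
    (hK : K = ![
      C 12 * X ^ 3 + C 50 * X ^ 2 + C 32 * X + C 2,
      C 18 * X ^ 3 + C 52 * X ^ 2 + C 26 * X,
      C 26 * X ^ 3 + C 52 * X ^ 2 + C 18 * X,
      C 2 * X ^ 4 + C 32 * X ^ 3 + C 50 * X ^ 2 + C 12 * X,
      C 2 * X ^ 4 + C 32 * X ^ 3 + C 50 * X ^ 2 + C 12 * X,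
      C 4 * X ^ 4 + C 38 * X ^ 3 + C 48 * X ^ 2 + C 6 * X,
      C 6 * X ^ 4 + C 48 * X ^ 3 + C 38 * X ^ 2 + C 4 * X,
      C 12 * X ^ 4 + C 50 * X ^ 3 + C 32 * X ^ 2 + C 2 * X]) :
    (∀ i : Fin 8, AllRealRoots (K i)) ∧
    (∀ i j : Fin 8, i < j → Interlaces (K i) (K j)) := by
  subst hK
  obtain ⟨a0, b0, c0, ⟨ha0l, ha0r⟩, ⟨hb0l, hb0r⟩, ⟨hc0l, hc0r⟩, hr0, hr7⟩ := p07_data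
  obtain ⟨a1, b1, ⟨ha1l, ha1r⟩, ⟨hb1l, hb1r⟩, hr1⟩ := p1_data
  obtain ⟨a2, b2, ⟨ha2l, ha2r⟩, ⟨hb2l, hb2r⟩, hr2⟩ := p2_data
  obtain ⟨a3, b3, c3, ⟨ha3l, ha3r⟩, ⟨hb3l, hb3r⟩, ⟨hc3l, hc3r⟩, hr3⟩ := p3_data
  obtain ⟨a5, b5, c5, ⟨ha5l, ha5r⟩, ⟨hb5l, hb5r⟩, ⟨hc5l, hc5r⟩, hr5⟩ := p5_data
  obtain ⟨a6, b6, c6, ⟨ha6l, ha6r⟩, ⟨hb6l, hb6r⟩, ⟨hc6l, hc6r⟩, hr6⟩ := p6_data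
  constructor
  · intro i
    fin_cases i
    · show AllRealRoots pp0
      show pp0.roots.card = pp0.natDegree
      rw [hr0, hdeg0]; simp
    · show AllRealRoots pp1
      show pp1.roots.card = pp1.natDegree
      rw [hr1, hdeg1]; simp
    · show AllRealRoots pp2
      show pp2.roots.card = pp2.natDegree
      rw [hr2, hdeg2]; simp
    · show AllRealRoots pp3
      show pp3.roots.card = pp3.natDegree
      rw [hr3, hdeg3]; simp
    · show AllRealRoots pp3
      show pp3.roots.card = pp3.natDegree
      rw [hr3, hdeg3]; simp
    · show AllRealRoots pp5
      show pp5.roots.card = pp5.natDegree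
      rw [hr5, hdeg5]; simp
    · show AllRealRoots pp6
      show pp6.roots.card = pp6.natDegree
      rw [hr6, hdeg6]; simp
    · show AllRealRoots pp7
      show pp7.roots.card = pp7.natDegree
      rw [hr7, hdeg7]; simp
  · intro i j
    fin_cases i <;> fin_cases j <;> intro hij
    · exact absurd hij (by decide)
    · show Interlaces pp0 pp1
      exact interlaces33 hlead1 hlead0 hdeg1 hdeg0 hr1 hr0
        (ha0r.trans_le (by norm_num)).le
        (ha1r.trans_le ((by norm_num : (-6431/10000:ℝ) ≤ -351/5000).trans ha0l.le)).le
        (hb0r.trans_le ((by norm_num : (-3503/5000:ℝ) ≤ -3217/5000).trans ha1l.le)).le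
        (hb1r.trans_le ((by norm_num : (-4491/2000:ℝ) ≤ -7009/10000).trans hb0l.le)).le
        (hc0r.trans_le ((by norm_num : (-33957/10000:ℝ) ≤ -11229/5000).trans hb1l.le)).le
    · show Interlaces pp0 pp2
      exact interlaces33 hlead2 hlead0 hdeg2 hdeg0 hr2 hr0
        (ha0r.trans_le (by norm_num)).le
        (ha2r.trans_le ((by norm_num : (-1113/2500:ℝ) ≤ -351/5000).trans ha0l.le)).le
        (hb0r.trans_le ((by norm_num : (-3503/5000:ℝ) ≤ -2227/5000).trans ha2l.le)).le
        (hb2r.trans_le ((by norm_num : (-7773/5000:ℝ) ≤ -7009/10000).trans hb0l.le)).le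
        (hc0r.trans_le ((by norm_num : (-33957/10000:ℝ) ≤ -3887/2500).trans hb2l.le)).le
    · show Interlaces pp0 pp3
      exact interlaces34 hlead3 hlead0 hdeg3 hdeg0 hr3 hr0
        (ha0r.trans_le (by norm_num)).le
        (ha3r.trans_le ((by norm_num : (-2943/10000:ℝ) ≤ -351/5000).trans ha0l.le)).le
        (hb0r.trans_le ((by norm_num : (-3503/5000:ℝ) ≤ -1473/5000).trans ha3l.le)).le
        (hb3r.trans_le ((by norm_num : (-3567/2500:ℝ) ≤ -7009/10000).trans hb0l.le)).le
        (hc0r.trans_le ((by norm_num : (-33957/10000:ℝ) ≤ -14271/10000).trans hb3l.le)).le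
        (hc3r.trans_le ((by norm_num : (-8924/625:ℝ) ≤ -849/250).trans hc0l.le)).le
    · show Interlaces pp0 pp3
      exact interlaces34 hlead3 hlead0 hdeg3 hdeg0 hr3 hr0
        (ha0r.trans_le (by norm_num)).le
        (ha3r.trans_le ((by norm_num : (-2943/10000:ℝ) ≤ -351/5000).trans ha0l.le)).le
        (hb0r.trans_le ((by norm_num : (-3503/5000:ℝ) ≤ -1473/5000).trans ha3l.le)).le
        (hb3r.trans_le ((by norm_num : (-3567/2500:ℝ) ≤ -7009/10000).trans hb0l.le)).le
        (hc0r.trans_le ((by norm_num : (-33957/10000:ℝ) ≤ -14271/10000).trans hb3l.le)).le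
        (hc3r.trans_le ((by norm_num : (-8924/625:ℝ) ≤ -849/250).trans hc0l.le)).le
    · show Interlaces pp0 pp5
      exact interlaces34 hlead5 hlead0 hdeg5 hdeg0 hr5 hr0
        (ha0r.trans_le (by norm_num)).le
        (ha5r.trans_le ((by norm_num : (-701/5000:ℝ) ≤ -351/5000).trans ha0l.le)).le
        (hb0r.trans_le ((by norm_num : (-3503/5000:ℝ) ≤ -281/2000).trans ha5l.le)).le
        (hb5r.trans_le ((by norm_num : (-13309/10000:ℝ) ≤ -7009/10000).trans hb0l.le)).le
        (hc0r.trans_le ((by norm_num : (-33957/10000:ℝ) ≤ -832/625).trans hb5l.le)).le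
        (hc5r.trans_le ((by norm_num : (-16057/2000:ℝ) ≤ -849/250).trans hc0l.le)).le
    · show Interlaces pp0 pp6
      exact interlaces34 hlead6 hlead0 hdeg6 hdeg0 hr6 hr0
        (ha0r.trans_le (by norm_num)).le
        (ha6r.trans_le ((by norm_num : (-311/2500:ℝ) ≤ -351/5000).trans ha0l.le)).le
        (hb0r.trans_le ((by norm_num : (-3503/5000:ℝ) ≤ -1247/10000).trans ha6l.le)).le
        (hb6r.trans_le ((by norm_num : (-939/1250:ℝ) ≤ -7009/10000).trans hb0l.le)).le
        (hc0r.trans_le ((by norm_num : (-33957/10000:ℝ) ≤ -1503/2000).trans hb6l.le)).le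
        (hc6r.trans_le ((by norm_num : (-1781/250:ℝ) ≤ -849/250).trans hc0l.le)).le
    · show Interlaces pp0 pp7
      exact interlaces34 hlead7 hlead0 hdeg7 hdeg0 hr7 hr0
        (ha0r.trans_le (by norm_num)).le
        le_rfl
        (hb0r.trans_le ((by norm_num : (-3503/5000:ℝ) ≤ -351/5000).trans ha0l.le)).le
        le_rfl
        (hc0r.trans_le ((by norm_num : (-33957/10000:ℝ) ≤ -7009/10000).trans hb0l.le)).le
        le_rfl
    · exact absurd hij (by decide)
    · exact absurd hij (by decide)
    · show Interlaces pp1 pp2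
      exact interlaces33 hlead2 hlead1 hdeg2 hdeg1 hr2 hr1
        le_rfl
        (ha2r.trans_le (by norm_num)).le
        (ha1r.trans_le ((by norm_num : (-6431/10000:ℝ) ≤ -2227/5000).trans ha2l.le)).le
        (hb2r.trans_le ((by norm_num : (-7773/5000:ℝ) ≤ -3217/5000).trans ha1l.le)).le
        (hb1r.trans_le ((by norm_num : (-4491/2000:ℝ) ≤ -3887/2500).trans hb2l.le)).le
    · show Interlaces pp1 pp3
      exact interlaces34 hlead3 hlead1 hdeg3 hdeg1 hr3 hr1
        le_rfl
        (ha3r.trans_le (by norm_num)).le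
        (ha1r.trans_le ((by norm_num : (-6431/10000:ℝ) ≤ -1473/5000).trans ha3l.le)).le
        (hb3r.trans_le ((by norm_num : (-3567/2500:ℝ) ≤ -3217/5000).trans ha1l.le)).le
        (hb1r.trans_le ((by norm_num : (-4491/2000:ℝ) ≤ -14271/10000).trans hb3l.le)).le
        (hc3r.trans_le ((by norm_num : (-8924/625:ℝ) ≤ -11229/5000).trans hb1l.le)).le
    · show Interlaces pp1 pp3
      exact interlaces34 hlead3 hlead1 hdeg3 hdeg1 hr3 hr1
        le_rfl
        (ha3r.trans_le (by norm_num)).le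
        (ha1r.trans_le ((by norm_num : (-6431/10000:ℝ) ≤ -1473/5000).trans ha3l.le)).le
        (hb3r.trans_le ((by norm_num : (-3567/2500:ℝ) ≤ -3217/5000).trans ha1l.le)).le
        (hb1r.trans_le ((by norm_num : (-4491/2000:ℝ) ≤ -14271/10000).trans hb3l.le)).le
        (hc3r.trans_le ((by norm_num : (-8924/625:ℝ) ≤ -11229/5000).trans hb1l.le)).le
    · show Interlaces pp1 pp5
      exact interlaces34 hlead5 hlead1 hdeg5 hdeg1 hr5 hr1
        le_rfl
        (ha5r.trans_le (by norm_num)).le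
        (ha1r.trans_le ((by norm_num : (-6431/10000:ℝ) ≤ -281/2000).trans ha5l.le)).le
        (hb5r.trans_le ((by norm_num : (-13309/10000:ℝ) ≤ -3217/5000).trans ha1l.le)).le
        (hb1r.trans_le ((by norm_num : (-4491/2000:ℝ) ≤ -832/625).trans hb5l.le)).le
        (hc5r.trans_le ((by norm_num : (-16057/2000:ℝ) ≤ -11229/5000).trans hb1l.le)).le
    · show Interlaces pp1 pp6
      exact interlaces34 hlead6 hlead1 hdeg6 hdeg1 hr6 hr1
        le_rfl
        (ha6r.trans_le (by norm_num)).le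
        (ha1r.trans_le ((by norm_num : (-6431/10000:ℝ) ≤ -1247/10000).trans ha6l.le)).le
        (hb6r.trans_le ((by norm_num : (-939/1250:ℝ) ≤ -3217/5000).trans ha1l.le)).le
        (hb1r.trans_le ((by norm_num : (-4491/2000:ℝ) ≤ -1503/2000).trans hb6l.le)).le
        (hc6r.trans_le ((by norm_num : (-1781/250:ℝ) ≤ -11229/5000).trans hb1l.le)).le
    · show Interlaces pp1 pp7
      exact interlaces34 hlead7 hlead1 hdeg7 hdeg1 hr7 hr1
        le_rfl
        (ha0r.trans_le (by norm_num)).le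
        (ha1r.trans_le ((by norm_num : (-6431/10000:ℝ) ≤ -351/5000).trans ha0l.le)).le
        (hb0r.trans_le ((by norm_num : (-3503/5000:ℝ) ≤ -3217/5000).trans ha1l.le)).le
        (hb1r.trans_le ((by norm_num : (-4491/2000:ℝ) ≤ -7009/10000).trans hb0l.le)).le
        (hc0r.trans_le ((by norm_num : (-33957/10000:ℝ) ≤ -11229/5000).trans hb1l.le)).le
    · exact absurd hij (by decide)
    · exact absurd hij (by decide)
    · exact absurd hij (by decide)
    · show Interlaces pp2 pp3
      exact interlaces34 hlead3 hlead2 hdeg3 hdeg2 hr3 hr2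
        le_rfl
        (ha3r.trans_le (by norm_num)).le
        (ha2r.trans_le ((by norm_num : (-1113/2500:ℝ) ≤ -1473/5000).trans ha3l.le)).le
        (hb3r.trans_le ((by norm_num : (-3567/2500:ℝ) ≤ -2227/5000).trans ha2l.le)).le
        (hb2r.trans_le ((by norm_num : (-7773/5000:ℝ) ≤ -14271/10000).trans hb3l.le)).le
        (hc3r.trans_le ((by norm_num : (-8924/625:ℝ) ≤ -3887/2500).trans hb2l.le)).le
    · show Interlaces pp2 pp3
      exact interlaces34 hlead3 hlead2 hdeg3 hdeg2 hr3 hr2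
        le_rfl
        (ha3r.trans_le (by norm_num)).le
        (ha2r.trans_le ((by norm_num : (-1113/2500:ℝ) ≤ -1473/5000).trans ha3l.le)).le
        (hb3r.trans_le ((by norm_num : (-3567/2500:ℝ) ≤ -2227/5000).trans ha2l.le)).le
        (hb2r.trans_le ((by norm_num : (-7773/5000:ℝ) ≤ -14271/10000).trans hb3l.le)).le
        (hc3r.trans_le ((by norm_num : (-8924/625:ℝ) ≤ -3887/2500).trans hb2l.le)).le
    · show Interlaces pp2 pp5
      exact interlaces34 hlead5 hlead2 hdeg5 hdeg2 hr5 hr2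
        le_rfl
        (ha5r.trans_le (by norm_num)).le
        (ha2r.trans_le ((by norm_num : (-1113/2500:ℝ) ≤ -281/2000).trans ha5l.le)).le
        (hb5r.trans_le ((by norm_num : (-13309/10000:ℝ) ≤ -2227/5000).trans ha2l.le)).le
        (hb2r.trans_le ((by norm_num : (-7773/5000:ℝ) ≤ -832/625).trans hb5l.le)).le
        (hc5r.trans_le ((by norm_num : (-16057/2000:ℝ) ≤ -3887/2500).trans hb2l.le)).le
    · show Interlaces pp2 pp6
      exact interlaces34 hlead6 hlead2 hdeg6 hdeg2 hr6 hr2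
        le_rfl
        (ha6r.trans_le (by norm_num)).le
        (ha2r.trans_le ((by norm_num : (-1113/2500:ℝ) ≤ -1247/10000).trans ha6l.le)).le
        (hb6r.trans_le ((by norm_num : (-939/1250:ℝ) ≤ -2227/5000).trans ha2l.le)).le
        (hb2r.trans_le ((by norm_num : (-7773/5000:ℝ) ≤ -1503/2000).trans hb6l.le)).le
        (hc6r.trans_le ((by norm_num : (-1781/250:ℝ) ≤ -3887/2500).trans hb2l.le)).le
    · show Interlaces pp2 pp7
      exact interlaces34 hlead7 hlead2 hdeg7 hdeg2 hr7 hr2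
        le_rfl
        (ha0r.trans_le (by norm_num)).le
        (ha2r.trans_le ((by norm_num : (-1113/2500:ℝ) ≤ -351/5000).trans ha0l.le)).le
        (hb0r.trans_le ((by norm_num : (-3503/5000:ℝ) ≤ -2227/5000).trans ha2l.le)).le
        (hb2r.trans_le ((by norm_num : (-7773/5000:ℝ) ≤ -7009/10000).trans hb0l.le)).le
        (hc0r.trans_le ((by norm_num : (-33957/10000:ℝ) ≤ -3887/2500).trans hb2l.le)).le
    · exact absurd hij (by decide)
    · exact absurd hij (by decide)
    · exact absurd hij (by decide)
    · exact absurd hij (by decide)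
    · show Interlaces pp3 pp3
      exact interlaces44 hlead3 hlead3 hdeg3 hdeg3 hr3 hr3
        le_rfl
        (ha3r.trans_le (by norm_num)).le
        le_rfl
        (hb3r.trans_le ((by norm_num : (-3567/2500:ℝ) ≤ -1473/5000).trans ha3l.le)).le
        le_rfl
        (hc3r.trans_le ((by norm_num : (-8924/625:ℝ) ≤ -14271/10000).trans hb3l.le)).le
        le_rfl
    · show Interlaces pp3 pp5
      exact interlaces44 hlead5 hlead3 hdeg5 hdeg3 hr5 hr3
        le_rfl
        (ha5r.trans_le (by norm_num)).le
        (ha3r.trans_le ((by norm_num : (-2943/10000:ℝ) ≤ -281/2000).trans ha5l.le)).le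
        (hb5r.trans_le ((by norm_num : (-13309/10000:ℝ) ≤ -1473/5000).trans ha3l.le)).le
        (hb3r.trans_le ((by norm_num : (-3567/2500:ℝ) ≤ -832/625).trans hb5l.le)).le
        (hc5r.trans_le ((by norm_num : (-16057/2000:ℝ) ≤ -14271/10000).trans hb3l.le)).le
        (hc3r.trans_le ((by norm_num : (-8924/625:ℝ) ≤ -5018/625).trans hc5l.le)).le
    · show Interlaces pp3 pp6
      exact interlaces44 hlead6 hlead3 hdeg6 hdeg3 hr6 hr3
        le_rfl
        (ha6r.trans_le (by norm_num)).le
        (ha3r.trans_le ((by norm_num : (-2943/10000:ℝ) ≤ -1247/10000).trans ha6l.le)).le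
        (hb6r.trans_le ((by norm_num : (-939/1250:ℝ) ≤ -1473/5000).trans ha3l.le)).le
        (hb3r.trans_le ((by norm_num : (-3567/2500:ℝ) ≤ -1503/2000).trans hb6l.le)).le
        (hc6r.trans_le ((by norm_num : (-1781/250:ℝ) ≤ -14271/10000).trans hb3l.le)).le
        (hc3r.trans_le ((by norm_num : (-8924/625:ℝ) ≤ -71243/10000).trans hc6l.le)).le
    · show Interlaces pp3 pp7
      exact interlaces44 hlead7 hlead3 hdeg7 hdeg3 hr7 hr3
        le_rfl
        (ha0r.trans_le (by norm_num)).le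
        (ha3r.trans_le ((by norm_num : (-2943/10000:ℝ) ≤ -351/5000).trans ha0l.le)).le
        (hb0r.trans_le ((by norm_num : (-3503/5000:ℝ) ≤ -1473/5000).trans ha3l.le)).le
        (hb3r.trans_le ((by norm_num : (-3567/2500:ℝ) ≤ -7009/10000).trans hb0l.le)).le
        (hc0r.trans_le ((by norm_num : (-33957/10000:ℝ) ≤ -14271/10000).trans hb3l.le)).le
        (hc3r.trans_le ((by norm_num : (-8924/625:ℝ) ≤ -849/250).trans hc0l.le)).le
    · exact absurd hij (by decide)
    · exact absurd hij (by decide)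
    · exact absurd hij (by decide)
    · exact absurd hij (by decide)
    · exact absurd hij (by decide)
    · show Interlaces pp3 pp5
      exact interlaces44 hlead5 hlead3 hdeg5 hdeg3 hr5 hr3
        le_rfl
        (ha5r.trans_le (by norm_num)).le
        (ha3r.trans_le ((by norm_num : (-2943/10000:ℝ) ≤ -281/2000).trans ha5l.le)).le
        (hb5r.trans_le ((by norm_num : (-13309/10000:ℝ) ≤ -1473/5000).trans ha3l.le)).le
        (hb3r.trans_le ((by norm_num : (-3567/2500:ℝ) ≤ -832/625).trans hb5l.le)).le
        (hc5r.trans_le ((by norm_num : (-16057/2000:ℝ) ≤ -14271/10000).trans hb3l.le)).le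
        (hc3r.trans_le ((by norm_num : (-8924/625:ℝ) ≤ -5018/625).trans hc5l.le)).le
    · show Interlaces pp3 pp6
      exact interlaces44 hlead6 hlead3 hdeg6 hdeg3 hr6 hr3
        le_rfl
        (ha6r.trans_le (by norm_num)).le
        (ha3r.trans_le ((by norm_num : (-2943/10000:ℝ) ≤ -1247/10000).trans ha6l.le)).le
        (hb6r.trans_le ((by norm_num : (-939/1250:ℝ) ≤ -1473/5000).trans ha3l.le)).le
        (hb3r.trans_le ((by norm_num : (-3567/2500:ℝ) ≤ -1503/2000).trans hb6l.le)).le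
        (hc6r.trans_le ((by norm_num : (-1781/250:ℝ) ≤ -14271/10000).trans hb3l.le)).le
        (hc3r.trans_le ((by norm_num : (-8924/625:ℝ) ≤ -71243/10000).trans hc6l.le)).le
    · show Interlaces pp3 pp7
      exact interlaces44 hlead7 hlead3 hdeg7 hdeg3 hr7 hr3
        le_rfl
        (ha0r.trans_le (by norm_num)).le
        (ha3r.trans_le ((by norm_num : (-2943/10000:ℝ) ≤ -351/5000).trans ha0l.le)).le
        (hb0r.trans_le ((by norm_num : (-3503/5000:ℝ) ≤ -1473/5000).trans ha3l.le)).le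
        (hb3r.trans_le ((by norm_num : (-3567/2500:ℝ) ≤ -7009/10000).trans hb0l.le)).le
        (hc0r.trans_le ((by norm_num : (-33957/10000:ℝ) ≤ -14271/10000).trans hb3l.le)).le
        (hc3r.trans_le ((by norm_num : (-8924/625:ℝ) ≤ -849/250).trans hc0l.le)).le
    · exact absurd hij (by decide)
    · exact absurd hij (by decide)
    · exact absurd hij (by decide)
    · exact absurd hij (by decide)
    · exact absurd hij (by decide)
    · exact absurd hij (by decide)
    · show Interlaces pp5 pp6
      exact interlaces44 hlead6 hlead5 hdeg6 hdeg5 hr6 hr5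
        le_rfl
        (ha6r.trans_le (by norm_num)).le
        (ha5r.trans_le ((by norm_num : (-701/5000:ℝ) ≤ -1247/10000).trans ha6l.le)).le
        (hb6r.trans_le ((by norm_num : (-939/1250:ℝ) ≤ -281/2000).trans ha5l.le)).le
        (hb5r.trans_le ((by norm_num : (-13309/10000:ℝ) ≤ -1503/2000).trans hb6l.le)).le
        (hc6r.trans_le ((by norm_num : (-1781/250:ℝ) ≤ -832/625).trans hb5l.le)).le
        (hc5r.trans_le ((by norm_num : (-16057/2000:ℝ) ≤ -71243/10000).trans hc6l.le)).le
    · show Interlaces pp5 pp7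
      exact interlaces44 hlead7 hlead5 hdeg7 hdeg5 hr7 hr5
        le_rfl
        (ha0r.trans_le (by norm_num)).le
        (ha5r.trans_le ((by norm_num : (-701/5000:ℝ) ≤ -351/5000).trans ha0l.le)).le
        (hb0r.trans_le ((by norm_num : (-3503/5000:ℝ) ≤ -281/2000).trans ha5l.le)).le
        (hb5r.trans_le ((by norm_num : (-13309/10000:ℝ) ≤ -7009/10000).trans hb0l.le)).le
        (hc0r.trans_le ((by norm_num : (-33957/10000:ℝ) ≤ -832/625).trans hb5l.le)).le
        (hc5r.trans_le ((by norm_num : (-16057/2000:ℝ) ≤ -849/250).trans hc0l.le)).le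
    · exact absurd hij (by decide)
    · exact absurd hij (by decide)
    · exact absurd hij (by decide)
    · exact absurd hij (by decide)
    · exact absurd hij (by decide)
    · exact absurd hij (by decide)
    · exact absurd hij (by decide)
    · show Interlaces pp6 pp7
      exact interlaces44 hlead7 hlead6 hdeg7 hdeg6 hr7 hr6
        le_rfl
        (ha0r.trans_le (by norm_num)).le
        (ha6r.trans_le ((by norm_num : (-311/2500:ℝ) ≤ -351/5000).trans ha0l.le)).le
        (hb0r.trans_le ((by norm_num : (-3503/5000:ℝ) ≤ -1247/10000).trans ha6l.le)).le
        (hb6r.trans_le ((by norm_num : (-939/1250:ℝ) ≤ -7009/10000).trans hb0l.le)).le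
        (hc0r.trans_le ((by norm_num : (-33957/10000:ℝ) ≤ -1503/2000).trans hb6l.le)).le
        (hc6r.trans_le ((by norm_num : (-1781/250:ℝ) ≤ -849/250).trans hc0l.le)).le
    · exact absurd hij (by decide)
    · exact absurd hij (by decide)
    · exact absurd hij (by decide)
    · exact absurd hij (by decide)
    · exact absurd hij (by decide)
    · exact absurd hij (by decide)
    · exact absurd hij (by decide)
    · exact absurd hij (by decide)
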